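/- Let μ₁, μ₂ be real numbers, σ₁, σ₂ > 0, s₁, s₂ > 0, and n₁, n₂ > 0. Set a_j = (s_j²/n_j)·μ_j/(σ_j² + s_j²/n_j) and b_j = σ_j²/(σ_j² + s_j²/n_j) for j = 1, 2, and let δ(y₁, y₂) = 1[a₁ + b₁·y₁ > a₂ + b₂·y₂]. Then the iterated integral of δ(y₁, y₂)·m₁ + (1 − δ(y₁, y₂))·m₂, where y₁ is integrated against gaussianReal m₁ (s₁²/n₁), y₂ against gaussianReal m₂ (s₂²/n₂), m₁ against gaussianReal μ₁ σ₁², and m₂ against gaussianReal μ₂ σ₂², equals μ₁ + e·Φ(e/v) + v·φ(e/v), where e = μ₂ − μ₁ and v = √(σ₁⁴/(σ₁² + s₁²/n₁) + σ₂⁴/(σ₂² + s₂²/n₂)). -/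

import Mathlib

open MeasureTheory Real ProbabilityTheory Filter Set
open scoped NNReal ENNReal

/-- Standard normal density. -/
noncomputable def stdNormalPdf (x : ℝ) : ℝ := Real.exp (-x ^ 2 / 2) / Real.sqrt (2 * Real.pi)

/-- Standard normal CDF. -/
noncomputable def stdNormalCdf (x : ℝ) : ℝ := ∫ t in Set.Iic x, stdNormalPdf t

lemma sqrt_two_pi_pos : 0 < Real.sqrt (2 * Real.pi) :=
  Real.sqrt_pos.2 (by positivity)

lemma stdNormalPdf_pos (x : ℝ) : 0 < stdNormalPdf x := by
  unfold stdNormalPdf; positivity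

lemma stdNormalPdf_nonneg (x : ℝ) : 0 ≤ stdNormalPdf x := (stdNormalPdf_pos x).le

lemma one_le_sqrt_two_pi : (1:ℝ) ≤ Real.sqrt (2 * Real.pi) := by
  rw [show (1:ℝ) = Real.sqrt 1 by simp]
  exact Real.sqrt_le_sqrt (by nlinarith [Real.pi_gt_three])

lemma stdNormalPdf_le_one (x : ℝ) : stdNormalPdf x ≤ 1 := by
  unfold stdNormalPdf
  rw [div_le_one sqrt_two_pi_pos]
  calc Real.exp (-x ^ 2 / 2) ≤ Real.exp 0 := Real.exp_le_exp.2 (by nlinarith [sq_nonneg x])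
    _ = 1 := Real.exp_zero
    _ ≤ Real.sqrt (2 * Real.pi) := one_le_sqrt_two_pi

lemma continuous_stdNormalPdf : Continuous stdNormalPdf := by
  unfold stdNormalPdf
  fun_prop

lemma stdNormalPdf_eq (x : ℝ) :
    stdNormalPdf x = (Real.sqrt (2 * Real.pi))⁻¹ * Real.exp (-(1/2) * x ^ 2) := by
  unfold stdNormalPdf; rw [eq_comm, inv_mul_eq_div, div_eq_div_iff sqrt_two_pi_pos.ne' sqrt_two_pi_pos.ne']
  ring_nf

lemma integrable_stdNormalPdf : Integrable stdNormalPdf := by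
  have := (integrable_exp_neg_mul_sq (b := (1:ℝ)/2) (by norm_num)).const_mul (Real.sqrt (2 * Real.pi))⁻¹
  exact this.congr (by filter_upwards with x; rw [stdNormalPdf_eq])

lemma integrable_mul_stdNormalPdf : Integrable (fun x => x * stdNormalPdf x) := by
  have := ((integrable_mul_exp_neg_mul_sq (b := (1:ℝ)/2) (by norm_num)).const_mul
    (Real.sqrt (2 * Real.pi))⁻¹)
  exact this.congr (by filter_upwards with x; rw [stdNormalPdf_eq]; ring)

lemma integrable_abs_mul_stdNormalPdf : Integrable (fun x => |x| * stdNormalPdf x) := by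
  have := integrable_mul_stdNormalPdf.abs
  exact this.congr (by
    filter_upwards with x
    rw [abs_mul, abs_of_nonneg (stdNormalPdf_nonneg x)])

lemma integral_stdNormalPdf : ∫ x, stdNormalPdf x = 1 := by
  have h : ∫ x : ℝ, Real.exp (-(1/2) * x ^ 2) = Real.sqrt (Real.pi / (1/2)) :=
    integral_gaussian (1/2)
  have h2 : Real.sqrt (Real.pi / (1/2)) = Real.sqrt (2 * Real.pi) := by norm_num; ring_nf
  calc ∫ x, stdNormalPdf x
      = ∫ x, (Real.sqrt (2 * Real.pi))⁻¹ * Real.exp (-(1/2) * x ^ 2) := by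
        congr 1; funext x; rw [stdNormalPdf_eq]
    _ = (Real.sqrt (2 * Real.pi))⁻¹ * ∫ x : ℝ, Real.exp (-(1/2) * x ^ 2) := integral_const_mul _ _
    _ = 1 := by rw [h, h2, inv_mul_cancel₀ sqrt_two_pi_pos.ne']

lemma integral_mul_stdNormalPdf : ∫ x, x * stdNormalPdf x = 0 := by
  have hodd : ∀ x : ℝ, (-x) * stdNormalPdf (-x) = -(x * stdNormalPdf x) := by
    intro x; unfold stdNormalPdf; rw [neg_pow]; ring_nf
  have h := integral_neg_eq_self (fun x => x * stdNormalPdf x) (volume : Measure ℝ)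
  simp only [hodd, integral_neg] at h
  linarith

open Filter Set

lemma stdNormalPdf_neg (x : ℝ) : stdNormalPdf (-x) = stdNormalPdf x := by
  unfold stdNormalPdf; rw [neg_pow]; ring_nf

lemma stdNormalCdf_eq_const_add (x : ℝ) :
    stdNormalCdf x = stdNormalCdf 0 + ∫ t in (0:ℝ)..x, stdNormalPdf t := by
  have h := intervalIntegral.integral_Iic_sub_Iic
    (integrable_stdNormalPdf.integrableOn (s := Iic (0:ℝ)))
    (integrable_stdNormalPdf.integrableOn (s := Iic x))
  unfold stdNormalCdf
  linarith

lemma hasDerivAt_stdNormalCdf (x : ℝ) : HasDerivAt stdNormalCdf (stdNormalPdf x) x := by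
  have hfun : stdNormalCdf = fun y => stdNormalCdf 0 + ∫ t in (0:ℝ)..y, stdNormalPdf t :=
    funext stdNormalCdf_eq_const_add
  rw [hfun]
  exact (intervalIntegral.integral_hasDerivAt_right
    (integrable_stdNormalPdf.intervalIntegrable)
    (continuous_stdNormalPdf.stronglyMeasurable.stronglyMeasurableAtFilter)
    continuous_stdNormalPdf.continuousAt).const_add _

lemma continuous_stdNormalCdf : Continuous stdNormalCdf :=
  continuous_iff_continuousAt.2 fun x => (hasDerivAt_stdNormalCdf x).continuousAt

lemma stdNormalCdf_nonneg (x : ℝ) : 0 ≤ stdNormalCdf x :=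
  setIntegral_nonneg measurableSet_Iic fun t _ => stdNormalPdf_nonneg t

lemma stdNormalCdf_le_one (x : ℝ) : stdNormalCdf x ≤ 1 := by
  rw [← integral_stdNormalPdf]
  exact setIntegral_le_integral integrable_stdNormalPdf
    (Filter.Eventually.of_forall fun t => stdNormalPdf_nonneg t)

lemma stdNormalCdf_neg (x : ℝ) : stdNormalCdf (-x) = 1 - stdNormalCdf x := by
  have h1 : stdNormalCdf x + ∫ t in Ioi x, stdNormalPdf t = 1 := by
    unfold stdNormalCdf
    rw [← compl_Iic (a := x), ← integral_stdNormalPdf]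
    exact integral_add_compl measurableSet_Iic integrable_stdNormalPdf
  have h2 : stdNormalCdf (-x) = ∫ t in Ioi x, stdNormalPdf t := by
    have := integral_comp_neg_Iic (-x) stdNormalPdf
    simp only [stdNormalPdf_neg, neg_neg] at this
    unfold stdNormalCdf
    rw [← this]
  linarith

lemma tendsto_stdNormalCdf_atBot : Tendsto stdNormalCdf atBot (nhds 0) := by
  have key : ∀ x : ℝ, stdNormalCdf x = ∫ t, (Iic x).indicator stdNormalPdf t := by
    intro x; unfold stdNormalCdf; rw [integral_indicator measurableSet_Iic]
  rw [funext key, show (0:ℝ) = ∫ t : ℝ, (0:ℝ) by simp]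
  apply tendsto_integral_filter_of_dominated_convergence (bound := stdNormalPdf)
  · filter_upwards with x
    exact (continuous_stdNormalPdf.stronglyMeasurable.indicator measurableSet_Iic).aestronglyMeasurable
  · filter_upwards with x
    filter_upwards with t
    rw [Real.norm_eq_abs, abs_of_nonneg (Set.indicator_nonneg (fun s _ => stdNormalPdf_nonneg s) t)]
    exact Set.indicator_le_self' (fun s _ => stdNormalPdf_nonneg s) t
  · exact integrable_stdNormalPdf
  · filter_upwards with t
    apply tendsto_nhds_of_eventually_eq
    filter_upwards [eventually_lt_atBot t] with x hx
    simp [Set.indicator_of_notMem, hx.not_ge]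

lemma tendsto_stdNormalPdf_atBot : Tendsto stdNormalPdf atBot (nhds 0) := by
  unfold stdNormalPdf
  rw [show (0:ℝ) = 0 / Real.sqrt (2 * Real.pi) by simp]
  apply Tendsto.div_const
  apply Real.tendsto_exp_atBot.comp
  have habs : Tendsto (fun x : ℝ => |x|) atBot atTop := tendsto_abs_atBot_atTop
  have hpow : Tendsto (fun x : ℝ => x ^ 2) atTop atTop := tendsto_pow_atTop (by norm_num)
  have h : Tendsto (fun x : ℝ => x ^ 2) atBot atTop := by
    have := hpow.comp habs
    refine this.congr fun x => ?_
    simp [Function.comp, sq_abs]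
  apply Tendsto.atBot_div_const (by norm_num : (0:ℝ) < 2)
  exact tendsto_neg_atTop_atBot.comp h

lemma tendsto_stdNormalPdf_comp_atBot {c : ℝ} (hc : 0 < c) :
    Tendsto (fun α => stdNormalPdf (α / c)) atBot (nhds 0) :=
  tendsto_stdNormalPdf_atBot.comp (tendsto_id.atBot_div_const hc)

lemma tendsto_stdNormalCdf_comp_atBot {c : ℝ} (hc : 0 < c) :
    Tendsto (fun α => stdNormalCdf (α / c)) atBot (nhds 0) :=
  tendsto_stdNormalCdf_atBot.comp (tendsto_id.atBot_div_const hc)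
lemma integral_exp_half {c : ℝ} (hc : 0 < c) :
    ∫ x : ℝ, Real.exp (-(c * x ^ 2) / 2) = Real.sqrt (2 * Real.pi / c) := by
  have h : ∀ x : ℝ, -(c * x ^ 2) / 2 = -(c/2) * x ^ 2 := fun x => by ring
  simp only [h]
  rw [integral_gaussian (c/2)]
  congr 1
  field_simp

lemma integral_x_mul_exp_half (c : ℝ) : ∫ x : ℝ, x * Real.exp (-(c * x ^ 2) / 2) = 0 := by
  have h := integral_neg_eq_self (fun x : ℝ => x * Real.exp (-(c * x ^ 2) / 2)) (volume : Measure ℝ)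
  have hodd : ∀ x : ℝ, (-x) * Real.exp (-(c * (-x) ^ 2) / 2) = -(x * Real.exp (-(c * x ^ 2) / 2)) := by
    intro x; rw [neg_pow]; ring_nf
  simp only [hodd, integral_neg] at h
  linarith

lemma integrable_linear_mul_exp_half {c : ℝ} (hc : 0 < c) (p q : ℝ) :
    Integrable (fun x : ℝ => (p + q * x) * Real.exp (-(c * x ^ 2) / 2)) := by
  have h1 := (integrable_exp_neg_mul_sq (b := c/2) (by linarith)).const_mul p
  have h2 := (integrable_mul_exp_neg_mul_sq (b := c/2) (by linarith)).const_mul q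
  have heq : (fun x : ℝ => (p + q * x) * Real.exp (-(c * x ^ 2) / 2))
      = fun x => p * Real.exp (-(c/2) * x ^ 2) + q * (x * Real.exp (-(c/2) * x ^ 2)) := by
    funext x
    rw [show -(c/2) * x ^ 2 = -(c * x ^ 2) / 2 from by ring]
    ring
  rw [heq]
  exact h1.add h2

lemma key_gauss (p q α β : ℝ) :
    ∫ x, (p + q * x) * (stdNormalPdf (α + β * x) * stdNormalPdf x)
      = (p - q * (α * β / (1 + β ^ 2))) *
          (stdNormalPdf (α / Real.sqrt (1 + β ^ 2)) / Real.sqrt (1 + β ^ 2)) := by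
  set c : ℝ := 1 + β ^ 2 with hc_def
  have hc : 0 < c := by positivity
  set δ : ℝ := α * β / c with hδ_def
  -- pointwise rewriting of the product of densities
  have hpdf : ∀ x : ℝ, stdNormalPdf (α + β * x) * stdNormalPdf x
      = (2 * Real.pi)⁻¹ * Real.exp (-(α ^ 2 / c) / 2) * Real.exp (-(c * (x + δ) ^ 2) / 2) := by
    intro x
    unfold stdNormalPdf
    rw [div_mul_div_comm, ← Real.exp_add, Real.mul_self_sqrt (by positivity),
      mul_assoc, ← Real.exp_add, inv_mul_eq_div]
    have hexp : -(α + β * x) ^ 2 / 2 + -x ^ 2 / 2 = -(α ^ 2 / c) / 2 + -(c * (x + δ) ^ 2) / 2 := by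
      rw [hδ_def, hc_def]
      field_simp
      ring
    rw [hexp, Real.exp_add]
  calc ∫ x, (p + q * x) * (stdNormalPdf (α + β * x) * stdNormalPdf x)
      = ∫ x, (2 * Real.pi)⁻¹ * Real.exp (-(α ^ 2 / c) / 2) *
          (((p - q * δ) + q * (x + δ)) * Real.exp (-(c * (x + δ) ^ 2) / 2)) := by
        congr 1; funext x; rw [hpdf x]; ring
    _ = (2 * Real.pi)⁻¹ * Real.exp (-(α ^ 2 / c) / 2) *
          ∫ x, ((p - q * δ) + q * (x + δ)) * Real.exp (-(c * (x + δ) ^ 2) / 2) := by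
        rw [integral_const_mul]
    _ = (2 * Real.pi)⁻¹ * Real.exp (-(α ^ 2 / c) / 2) *
          ∫ x, ((p - q * δ) + q * x) * Real.exp (-(c * x ^ 2) / 2) := by
        rw [integral_add_right_eq_self (fun x : ℝ => ((p - q * δ) + q * x) * Real.exp (-(c * x ^ 2) / 2)) δ]
    _ = (2 * Real.pi)⁻¹ * Real.exp (-(α ^ 2 / c) / 2) *
          ((p - q * δ) * Real.sqrt (2 * Real.pi / c) + q * 0) := by
        congr 1
        have hsplit : ∀ x : ℝ, ((p - q * δ) + q * x) * Real.exp (-(c * x ^ 2) / 2)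
            = (p - q * δ) * Real.exp (-(c * x ^ 2) / 2) + q * (x * Real.exp (-(c * x ^ 2) / 2)) := by
          intro x; ring
        simp only [hsplit]
        rw [integral_add (((integrable_exp_neg_mul_sq (b := c/2) (by linarith)).congr
            (Filter.Eventually.of_forall fun x => by simp only [show -(c/2) * x ^ 2 = -(c * x ^ 2) / 2 from by ring])).const_mul _)
          (((integrable_mul_exp_neg_mul_sq (b := c/2) (by linarith)).congr
            (Filter.Eventually.of_forall fun x => by simp only [show -(c/2) * x ^ 2 = -(c * x ^ 2) / 2 from by ring])).const_mul _),
          integral_const_mul, integral_const_mul, integral_exp_half hc, integral_x_mul_exp_half]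
    _ = (p - q * δ) * (stdNormalPdf (α / Real.sqrt c) / Real.sqrt c) := by
        have hS : Real.sqrt (2 * Real.pi) * Real.sqrt (2 * Real.pi) = 2 * Real.pi :=
          Real.mul_self_sqrt (by positivity)
        have hrc : Real.sqrt c ≠ 0 := (Real.sqrt_pos.2 hc).ne'
        unfold stdNormalPdf
        rw [div_pow, Real.sq_sqrt hc.le, Real.sqrt_div (by positivity : (0:ℝ) ≤ 2 * Real.pi) c,
          mul_zero, add_zero, ← hS]
        field_simp
        ring_nf; rw [Real.sqrt_sq (Real.sqrt_nonneg _)]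
    _ = _ := by rw [hδ_def]
lemma hasDerivAt_stdNormalPdf (x : ℝ) :
    HasDerivAt stdNormalPdf (-x * stdNormalPdf x) x := by
  have h1 : HasDerivAt (fun x : ℝ => -x ^ 2 / 2) (-x) x := by
    have := ((hasDerivAt_pow 2 x).neg).div_const 2
    refine this.congr_deriv ?_
    norm_num
    ring
  have h2 := (h1.exp).div_const (Real.sqrt (2 * Real.pi))
  have : Real.exp (-x ^ 2 / 2) * (-x) / Real.sqrt (2 * Real.pi) = -x * stdNormalPdf x := by
    unfold stdNormalPdf; ring
  rw [this] at h2
  exact h2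

lemma abs_linear_le (p q x : ℝ) : |p + q * x| ≤ |p| + |q| * |x| := by
  calc |p + q * x| ≤ |p| + |q * x| := abs_add_le _ _
    _ = |p| + |q| * |x| := by rw [abs_mul]

lemma integrable_absLinear (p q : ℝ) :
    Integrable (fun x => (|p| + |q| * |x|) * stdNormalPdf x) := by
  have h := (integrable_stdNormalPdf.const_mul |p|).add
    (integrable_abs_mul_stdNormalPdf.const_mul |q|)
  exact h.congr (Filter.Eventually.of_forall fun x => by simp only [Pi.add_apply]; ring)

lemma bound_helper {A B C D : ℝ} (hAB : A ≤ B) (hA : 0 ≤ A) (hC0 : 0 ≤ C) (hC1 : C ≤ 1)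
    (hD : 0 ≤ D) : A * C * D ≤ B * D := by
  calc A * C * D ≤ B * 1 * D :=
        mul_le_mul_of_nonneg_right (mul_le_mul hAB hC1 hC0 (hA.trans hAB)) hD
    _ = B * D := by ring

lemma cont_master (p q β a : ℝ) :
    Continuous (fun x => (p + q * x) * stdNormalCdf (a + β * x) * stdNormalPdf x) :=
  (((continuous_const.add (continuous_const.mul continuous_id)).mul
    (continuous_stdNormalCdf.comp (continuous_const.add (continuous_const.mul continuous_id)))).mul
    continuous_stdNormalPdf)

lemma cont_master' (p q β a : ℝ) :
    Continuous (fun x => (p + q * x) * stdNormalPdf (a + β * x) * stdNormalPdf x) :=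
  (((continuous_const.add (continuous_const.mul continuous_id)).mul
    (continuous_stdNormalPdf.comp (continuous_const.add (continuous_const.mul continuous_id)))).mul
    continuous_stdNormalPdf)

lemma integrable_master (p q β a : ℝ) :
    Integrable (fun x => (p + q * x) * stdNormalCdf (a + β * x) * stdNormalPdf x) := by
  refine (integrable_absLinear p q).mono' (cont_master p q β a).aestronglyMeasurable ?_
  filter_upwards with x
  rw [Real.norm_eq_abs, abs_mul, abs_mul,
    abs_of_nonneg (stdNormalCdf_nonneg _), abs_of_nonneg (stdNormalPdf_nonneg _)]
  exact bound_helper (abs_linear_le p q x) (abs_nonneg _) (stdNormalCdf_nonneg _)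
    (stdNormalCdf_le_one _) (stdNormalPdf_nonneg x)

lemma master (p q β α : ℝ) :
    ∫ x, (p + q * x) * stdNormalCdf (α + β * x) * stdNormalPdf x
      = p * stdNormalCdf (α / Real.sqrt (1 + β ^ 2))
        + q * β / Real.sqrt (1 + β ^ 2) * stdNormalPdf (α / Real.sqrt (1 + β ^ 2)) := by
  set r : ℝ := Real.sqrt (1 + β ^ 2) with hr_def
  have hr : 0 < r := Real.sqrt_pos.2 (by positivity)
  have hr2 : r ^ 2 = 1 + β ^ 2 := Real.sq_sqrt (by positivity)
  set F : ℝ → ℝ := fun a => ∫ x, (p + q * x) * stdNormalCdf (a + β * x) * stdNormalPdf x with hF_def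
  set G : ℝ → ℝ := fun a => p * stdNormalCdf (a / r) + q * β / r * stdNormalPdf (a / r) with hG_def
  have hFderiv : ∀ a : ℝ, HasDerivAt F ((p - q * (a * β / (1 + β ^ 2))) * (stdNormalPdf (a / r) / r)) a := by
    intro a
    have key := hasDerivAt_integral_of_dominated_loc_of_deriv_le (μ := (volume : Measure ℝ))
      (F := fun a' x => (p + q * x) * stdNormalCdf (a' + β * x) * stdNormalPdf x)
      (F' := fun a' x => (p + q * x) * stdNormalPdf (a' + β * x) * stdNormalPdf x)
      (x₀ := a) (bound := fun x => (|p| + |q| * |x|) * stdNormalPdf x)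
      (Metric.ball_mem_nhds a zero_lt_one)
      (Filter.Eventually.of_forall fun a' => (cont_master p q β a').aestronglyMeasurable)
      (integrable_master p q β a)
      (cont_master' p q β a).aestronglyMeasurable
      ?_ (integrable_absLinear p q) ?_
    · have h2 := key.2
      have heq : (∫ x, (p + q * x) * stdNormalPdf (a + β * x) * stdNormalPdf x)
          = (p - q * (a * β / (1 + β ^ 2))) * (stdNormalPdf (a / r) / r) := by
        rw [show (fun x => (p + q * x) * stdNormalPdf (a + β * x) * stdNormalPdf x)
            = fun x => (p + q * x) * (stdNormalPdf (a + β * x) * stdNormalPdf x) from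
          funext fun x => by ring]
        exact key_gauss p q a β
      rwa [heq] at h2
    · filter_upwards with x
      intro a' _
      rw [Real.norm_eq_abs, abs_mul, abs_mul,
        abs_of_nonneg (stdNormalPdf_nonneg (a' + β * x)), abs_of_nonneg (stdNormalPdf_nonneg x)]
      exact bound_helper (abs_linear_le p q x) (abs_nonneg _) (stdNormalPdf_nonneg _)
        (stdNormalPdf_le_one _) (stdNormalPdf_nonneg x)
    · filter_upwards with x
      intro a' _
      have h1 : HasDerivAt (fun a'' : ℝ => a'' + β * x) 1 a' := (hasDerivAt_id a').add_const _
      have h2 : HasDerivAt (fun a'' : ℝ => stdNormalCdf (a'' + β * x))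
          (stdNormalPdf (a' + β * x)) a' := by
        have := (hasDerivAt_stdNormalCdf (a' + β * x)).comp a' h1
        rw [mul_one] at this; exact this
      exact (h2.const_mul (p + q * x)).mul_const (stdNormalPdf x)
  have hGderiv : ∀ a : ℝ, HasDerivAt G ((p - q * (a * β / (1 + β ^ 2))) * (stdNormalPdf (a / r) / r)) a := by
    intro a
    have h1 : HasDerivAt (fun a' : ℝ => a' / r) (1 / r) a := by
      simpa using (hasDerivAt_id a).div_const r
    have hΦ : HasDerivAt (fun a' : ℝ => stdNormalCdf (a' / r)) (stdNormalPdf (a / r) * (1 / r)) a :=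
      by have := (hasDerivAt_stdNormalCdf (a / r)).comp a h1; exact this
    have hφ : HasDerivAt (fun a' : ℝ => stdNormalPdf (a' / r))
        ((-(a / r) * stdNormalPdf (a / r)) * (1 / r)) a :=
      by have := (hasDerivAt_stdNormalPdf (a / r)).comp a h1; exact this
    have hsum := (hΦ.const_mul p).add (hφ.const_mul (q * β / r))
    have heq : p * (stdNormalPdf (a / r) * (1 / r)) + q * β / r * ((-(a / r) * stdNormalPdf (a / r)) * (1 / r))
        = (p - q * (a * β / (1 + β ^ 2))) * (stdNormalPdf (a / r) / r) := by
      rw [← hr2]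
      field_simp
      ring
    rwa [heq] at hsum
  have hE : ∀ a : ℝ, HasDerivAt (fun a' => F a' - G a') 0 a := by
    intro a
    have := (hFderiv a).sub (hGderiv a); rw [sub_self] at this; exact this
  have hconst : ∀ a b : ℝ, F a - G a = F b - G b :=
    is_const_of_deriv_eq_zero (fun a => (hE a).differentiableAt)
      (fun a => (hE a).deriv)
  have hFlim : Filter.Tendsto F Filter.atBot (nhds 0) := by
    rw [hF_def, show (0:ℝ) = ∫ x : ℝ, (0:ℝ) by simp]
    apply tendsto_integral_filter_of_dominated_convergence
      (bound := fun x => (|p| + |q| * |x|) * stdNormalPdf x)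
    · filter_upwards with a
      exact (cont_master p q β a).aestronglyMeasurable
    · filter_upwards with a
      filter_upwards with x
      rw [Real.norm_eq_abs, abs_mul, abs_mul,
        abs_of_nonneg (stdNormalCdf_nonneg _), abs_of_nonneg (stdNormalPdf_nonneg _)]
      exact bound_helper (abs_linear_le p q x) (abs_nonneg _) (stdNormalCdf_nonneg _)
        (stdNormalCdf_le_one _) (stdNormalPdf_nonneg x)
    · exact integrable_absLinear p q
    · filter_upwards with x
      have h1 : Filter.Tendsto (fun a : ℝ => a + β * x) Filter.atBot Filter.atBot :=
        Filter.tendsto_atBot_add_const_right _ _ Filter.tendsto_id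
      have h2 : Filter.Tendsto (fun a : ℝ => stdNormalCdf (a + β * x)) Filter.atBot (nhds 0) :=
        tendsto_stdNormalCdf_atBot.comp h1
      have h3 := (h2.const_mul (p + q * x)).mul_const (stdNormalPdf x)
      simpa using h3
  have hGlim : Filter.Tendsto G Filter.atBot (nhds 0) := by
    rw [hG_def, show (0:ℝ) = p * 0 + q * β / r * 0 by ring]
    exact ((tendsto_stdNormalCdf_comp_atBot hr).const_mul p).add
      ((tendsto_stdNormalPdf_comp_atBot hr).const_mul (q * β / r))
  have hdiff_lim : Filter.Tendsto (fun a => F a - G a) Filter.atBot (nhds 0) := by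
    simpa using hFlim.sub hGlim
  have hzero : F α - G α = 0 := by
    have hconst_tendsto : Filter.Tendsto (fun _ : ℝ => F α - G α) Filter.atBot (nhds 0) :=
      hdiff_lim.congr fun b => (hconst b α)
    exact tendsto_nhds_unique tendsto_const_nhds hconst_tendsto
  have := sub_eq_zero.1 hzero
  rw [hF_def, hG_def] at this
  exact this
lemma gaussianPDFReal_affine (m : ℝ) (V : ℝ≥0) (hV : V ≠ 0) (x : ℝ) :
    gaussianPDFReal m V (m + Real.sqrt V * x) = stdNormalPdf x / Real.sqrt V := by
  have hVpos : (0:ℝ) < V := NNReal.coe_pos.2 (pos_iff_ne_zero.2 hV)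
  unfold gaussianPDFReal stdNormalPdf
  rw [show m + Real.sqrt V * x - m = Real.sqrt V * x from by ring, mul_pow,
    Real.sq_sqrt hVpos.le,
    show -((V:ℝ) * x ^ 2) / (2 * V) = -x ^ 2 / 2 from by
      rw [div_eq_div_iff (by positivity) (by norm_num)]; ring,
    Real.sqrt_mul (by positivity : (0:ℝ) ≤ 2 * Real.pi) (V:ℝ)]
  have hs1 : Real.sqrt (2 * Real.pi) ≠ 0 := sqrt_two_pi_pos.ne'
  have hs2 : Real.sqrt (V:ℝ) ≠ 0 := (Real.sqrt_pos.2 hVpos).ne'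
  field_simp

lemma integral_gaussianReal_eq (f : ℝ → ℝ) (m : ℝ) {V : ℝ≥0} (hV : V ≠ 0) :
    ∫ x, f x ∂(gaussianReal m V) = ∫ x, f (m + Real.sqrt V * x) * stdNormalPdf x := by
  have hVpos : (0:ℝ) < V := NNReal.coe_pos.2 (pos_iff_ne_zero.2 hV)
  have hσ : (0:ℝ) < Real.sqrt V := Real.sqrt_pos.2 hVpos
  rw [gaussianReal_of_var_ne_zero m hV]
  have hmeas : Measurable fun x => (gaussianPDFReal m V x).toNNReal :=
    (measurable_gaussianPDFReal m V).real_toNNReal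
  have hpdf_eq : gaussianPDF m V = fun x => ((gaussianPDFReal m V x).toNNReal : ℝ≥0∞) := rfl
  rw [hpdf_eq, integral_withDensity_eq_integral_smul hmeas f]
  have hsmul : ∀ x, (gaussianPDFReal m V x).toNNReal • f x = gaussianPDFReal m V x * f x :=
    fun x => by rw [NNReal.smul_def, smul_eq_mul, Real.coe_toNNReal _ (gaussianPDFReal_nonneg m V x)]
  simp only [hsmul]
  set h : ℝ → ℝ := fun y => gaussianPDFReal m V y * f y with hh
  have key : ∫ x, f (m + Real.sqrt V * x) * stdNormalPdf x = ∫ y, h y := by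
    have hpt : ∀ x : ℝ, f (m + Real.sqrt V * x) * stdNormalPdf x
        = Real.sqrt V * h (Real.sqrt V * x + m) := by
      intro x
      rw [hh]
      simp only []
      rw [show Real.sqrt V * x + m = m + Real.sqrt V * x by ring,
        gaussianPDFReal_affine m V hV x]
      field_simp
    simp only [hpt]
    rw [integral_const_mul]
    have h1 : ∫ x : ℝ, h (Real.sqrt V * x + m) = |(Real.sqrt V)⁻¹| • ∫ y, h (y + m) :=
      MeasureTheory.Measure.integral_comp_mul_left (fun y => h (y + m)) (Real.sqrt V)
    rw [h1, integral_add_right_eq_self h m, abs_of_pos (inv_pos.2 hσ), smul_eq_mul,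
      ← mul_assoc, mul_inv_cancel₀ hσ.ne', one_mul]
  rw [key]

lemma integrable_linear_mul_pdf (p q : ℝ) :
    Integrable (fun x => (p + q * x) * stdNormalPdf x) := by
  refine ((integrable_stdNormalPdf.const_mul p).add (integrable_mul_stdNormalPdf.const_mul q)).congr
    (Filter.Eventually.of_forall fun x => ?_)
  simp only [Pi.add_apply]
  ring

lemma integral_linear_mul_pdf (p q : ℝ) :
    ∫ x, (p + q * x) * stdNormalPdf x = p := by
  have hsplit : ∀ x : ℝ, (p + q * x) * stdNormalPdf x
      = p * stdNormalPdf x + q * (x * stdNormalPdf x) := fun x => by ring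
  simp only [hsplit]
  rw [integral_add (integrable_stdNormalPdf.const_mul p) (integrable_mul_stdNormalPdf.const_mul q),
    integral_const_mul, integral_const_mul, integral_stdNormalPdf, integral_mul_stdNormalPdf]
  ring

lemma integrable_pdf_mul_pdf (α β : ℝ) :
    Integrable (fun x => stdNormalPdf (α + β * x) * stdNormalPdf x) := by
  refine integrable_stdNormalPdf.mono' ?_ ?_
  · exact ((continuous_stdNormalPdf.comp (continuous_const.add
      (continuous_const.mul continuous_id))).mul continuous_stdNormalPdf).aestronglyMeasurable
  · filter_upwards with x
    rw [Real.norm_eq_abs, abs_mul, abs_of_nonneg (stdNormalPdf_nonneg _),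
      abs_of_nonneg (stdNormalPdf_nonneg _)]
    calc stdNormalPdf (α + β * x) * stdNormalPdf x ≤ 1 * stdNormalPdf x :=
          mul_le_mul_of_nonneg_right (stdNormalPdf_le_one _) (stdNormalPdf_nonneg x)
      _ = stdNormalPdf x := one_mul _

lemma integral_pdf_mul_pdf (α β : ℝ) :
    ∫ x, stdNormalPdf (α + β * x) * stdNormalPdf x
      = stdNormalPdf (α / Real.sqrt (1 + β ^ 2)) / Real.sqrt (1 + β ^ 2) := by
  have := key_gauss 1 0 α β
  simp only [zero_mul, add_zero, one_mul, zero_div, sub_zero] at this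
  rw [← this]

lemma ind_mul_pdf_eq (d : ℝ) :
    (fun x => (if x < d then (1:ℝ) else 0) * stdNormalPdf x)
      = Set.indicator (Set.Iio d) stdNormalPdf := by
  funext x
  by_cases h : x < d <;> simp [Set.indicator, Set.mem_Iio, h]

lemma integral_ind_mul_pdf (d : ℝ) :
    ∫ x, (if x < d then (1:ℝ) else 0) * stdNormalPdf x = stdNormalCdf d := by
  rw [ind_mul_pdf_eq, integral_indicator measurableSet_Iio]
  unfold stdNormalCdf
  exact setIntegral_congr_set Iio_ae_eq_Iic

lemma integrable_ind_mul_pdf (d : ℝ) :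
    Integrable (fun x => (if x < d then (1:ℝ) else 0) * stdNormalPdf x) := by
  rw [ind_mul_pdf_eq]
  exact integrable_stdNormalPdf.indicator measurableSet_Iio
lemma stage_general (c₀ q₀ p₀ r₀ K A B m : ℝ) {V : ℝ≥0} (hV : V ≠ 0) :
    ∫ y, (c₀ + q₀ * y + (p₀ + r₀ * y) * stdNormalCdf (A + B * y)
          + K * stdNormalPdf (A + B * y)) ∂(gaussianReal m V)
      = c₀ + q₀ * m
        + (p₀ + r₀ * m) * stdNormalCdf ((A + B * m) / Real.sqrt (1 + B ^ 2 * V))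
        + (r₀ * B * V + K) / Real.sqrt (1 + B ^ 2 * V)
            * stdNormalPdf ((A + B * m) / Real.sqrt (1 + B ^ 2 * V)) := by
  have hVpos : (0:ℝ) < V := NNReal.coe_pos.2 (pos_iff_ne_zero.2 hV)
  set σ : ℝ := Real.sqrt V with hσ_def
  have hσ : 0 < σ := Real.sqrt_pos.2 hVpos
  have hσ2 : σ ^ 2 = V := Real.sq_sqrt hVpos.le
  rw [integral_gaussianReal_eq _ m hV, ← hσ_def]
  have hpt : ∀ x : ℝ, (c₀ + q₀ * (m + σ * x) + (p₀ + r₀ * (m + σ * x)) * stdNormalCdf (A + B * (m + σ * x))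
        + K * stdNormalPdf (A + B * (m + σ * x))) * stdNormalPdf x
      = ((c₀ + q₀ * m) + q₀ * σ * x) * stdNormalPdf x
        + ((p₀ + r₀ * m) + r₀ * σ * x) * stdNormalCdf ((A + B * m) + B * σ * x) * stdNormalPdf x
        + K * (stdNormalPdf ((A + B * m) + B * σ * x) * stdNormalPdf x) := by
    intro x
    rw [show (A + B * m) + B * σ * x = A + B * (m + σ * x) from by ring]
    ring
  simp only [hpt]
  have h1 : Integrable (fun x => ((c₀ + q₀ * m) + q₀ * σ * x) * stdNormalPdf x) :=
    integrable_linear_mul_pdf _ _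
  have h2 : Integrable (fun x => ((p₀ + r₀ * m) + r₀ * σ * x)
      * stdNormalCdf ((A + B * m) + B * σ * x) * stdNormalPdf x) :=
    integrable_master _ _ _ _
  have h12 : Integrable (fun x => ((c₀ + q₀ * m) + q₀ * σ * x) * stdNormalPdf x
      + ((p₀ + r₀ * m) + r₀ * σ * x) * stdNormalCdf ((A + B * m) + B * σ * x) * stdNormalPdf x) :=
    h1.add h2
  have h3 : Integrable (fun x => K * (stdNormalPdf ((A + B * m) + B * σ * x) * stdNormalPdf x)) :=
    (integrable_pdf_mul_pdf _ _).const_mul K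
  rw [integral_add h12 h3, integral_add h1 h2,
    integral_const_mul, integral_linear_mul_pdf, master, integral_pdf_mul_pdf]
  have hr : Real.sqrt (1 + (B * σ) ^ 2) = Real.sqrt (1 + B ^ 2 * V) := by
    rw [mul_pow, hσ2]
  rw [hr]
  have hRpos : (0:ℝ) < Real.sqrt (1 + B ^ 2 * V) := Real.sqrt_pos.2 (by positivity)
  field_simp
  rw [← hσ2]
  ring

lemma stage_ind (c a b : ℝ) (hb : 0 < b) (m : ℝ) {V : ℝ≥0} (hV : V ≠ 0) :
    ∫ y, ((if c > a + b * y then (1:ℝ) else 0) * 1) ∂(gaussianReal m V)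
      = stdNormalCdf ((c - a - b * m) / (b * Real.sqrt V)) := by
  have hVpos : (0:ℝ) < V := NNReal.coe_pos.2 (pos_iff_ne_zero.2 hV)
  have hσ : (0:ℝ) < Real.sqrt V := Real.sqrt_pos.2 hVpos
  rw [integral_gaussianReal_eq _ m hV]
  set d : ℝ := (c - a - b * m) / (b * Real.sqrt V) with hd_def
  have hiff : ∀ x : ℝ, (c > a + b * (m + Real.sqrt V * x)) ↔ x < d := by
    intro x
    rw [hd_def, lt_div_iff₀ (by positivity)]
    constructor <;> intro h <;> nlinarith
  have hpt : ∀ x : ℝ, ((if c > a + b * (m + Real.sqrt V * x) then (1:ℝ) else 0) * 1) * stdNormalPdf x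
      = (if x < d then (1:ℝ) else 0) * stdNormalPdf x := by
    intro x
    rw [mul_one, if_congr (hiff x) rfl rfl]
  simp only [hpt]
  exact integral_ind_mul_pdf d

lemma stage4 (m₁ m₂ c a b : ℝ) (hb : 0 < b) (m : ℝ) {V : ℝ≥0} (hV : V ≠ 0) :
    ∫ y, ((if c > a + b * y then (1:ℝ) else 0) * m₁
        + (1 - (if c > a + b * y then (1:ℝ) else 0)) * m₂) ∂(gaussianReal m V)
      = m₂ + (m₁ - m₂) * stdNormalCdf ((c - a - b * m) / (b * Real.sqrt V)) := by
  have hVpos : (0:ℝ) < V := NNReal.coe_pos.2 (pos_iff_ne_zero.2 hV)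
  have hσ : (0:ℝ) < Real.sqrt V := Real.sqrt_pos.2 hVpos
  rw [integral_gaussianReal_eq _ m hV]
  set d : ℝ := (c - a - b * m) / (b * Real.sqrt V) with hd_def
  have hiff : ∀ x : ℝ, (c > a + b * (m + Real.sqrt V * x)) ↔ x < d := by
    intro x
    rw [hd_def, lt_div_iff₀ (by positivity)]
    constructor <;> intro h <;> nlinarith
  have hpt : ∀ x : ℝ, ((if c > a + b * (m + Real.sqrt V * x) then (1:ℝ) else 0) * m₁
        + (1 - (if c > a + b * (m + Real.sqrt V * x) then (1:ℝ) else 0)) * m₂) * stdNormalPdf x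
      = m₂ * stdNormalPdf x + (m₁ - m₂) * ((if x < d then (1:ℝ) else 0) * stdNormalPdf x) := by
    intro x
    rw [if_congr (hiff x) rfl rfl]
    ring
  simp only [hpt]
  rw [integral_add (integrable_stdNormalPdf.const_mul m₂) ((integrable_ind_mul_pdf d).const_mul _),
    integral_const_mul, integral_const_mul, integral_stdNormalPdf, integral_ind_mul_pdf]
  ring
lemma stage_cdf (c₀ p₀ A B m : ℝ) {V : ℝ≥0} (hV : V ≠ 0) :
    ∫ y, (c₀ + p₀ * stdNormalCdf (A + B * y)) ∂(gaussianReal m V)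
      = c₀ + p₀ * stdNormalCdf ((A + B * m) / Real.sqrt (1 + B ^ 2 * V)) := by
  calc ∫ y, (c₀ + p₀ * stdNormalCdf (A + B * y)) ∂(gaussianReal m V)
      = ∫ y, (c₀ + 0 * y + (p₀ + 0 * y) * stdNormalCdf (A + B * y)
          + 0 * stdNormalPdf (A + B * y)) ∂(gaussianReal m V) := by
        congr 1; funext y; ring
    _ = _ := stage_general c₀ 0 p₀ 0 0 A B m hV
    _ = c₀ + p₀ * stdNormalCdf ((A + B * m) / Real.sqrt (1 + B ^ 2 * V)) := by ring

lemma stage_lin (p₀ A B m : ℝ) {V : ℝ≥0} (hV : V ≠ 0) :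
    ∫ y, (y + (p₀ - y) * stdNormalCdf (A + B * y)) ∂(gaussianReal m V)
      = m + (p₀ - m) * stdNormalCdf ((A + B * m) / Real.sqrt (1 + B ^ 2 * V))
        - B * V / Real.sqrt (1 + B ^ 2 * V)
          * stdNormalPdf ((A + B * m) / Real.sqrt (1 + B ^ 2 * V)) := by
  calc ∫ y, (y + (p₀ - y) * stdNormalCdf (A + B * y)) ∂(gaussianReal m V)
      = ∫ y, ((0:ℝ) + 1 * y + (p₀ + (-1) * y) * stdNormalCdf (A + B * y)
          + 0 * stdNormalPdf (A + B * y)) ∂(gaussianReal m V) := by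
        congr 1; funext y; ring
    _ = _ := stage_general 0 1 p₀ (-1) 0 A B m hV
    _ = _ := by ring

lemma stage_fin (c₀ K A B m : ℝ) {V : ℝ≥0} (hV : V ≠ 0) :
    ∫ y, (c₀ + (y - c₀) * stdNormalCdf (A + B * y) + K * stdNormalPdf (A + B * y))
        ∂(gaussianReal m V)
      = c₀ + (m - c₀) * stdNormalCdf ((A + B * m) / Real.sqrt (1 + B ^ 2 * V))
        + (B * V + K) / Real.sqrt (1 + B ^ 2 * V)
          * stdNormalPdf ((A + B * m) / Real.sqrt (1 + B ^ 2 * V)) := by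
  calc ∫ y, (c₀ + (y - c₀) * stdNormalCdf (A + B * y) + K * stdNormalPdf (A + B * y))
        ∂(gaussianReal m V)
      = ∫ y, (c₀ + 0 * y + (-c₀ + 1 * y) * stdNormalCdf (A + B * y)
          + K * stdNormalPdf (A + B * y)) ∂(gaussianReal m V) := by
        congr 1; funext y; ring
    _ = _ := stage_general c₀ 0 (-c₀) 1 K A B m hV
    _ = _ := by ring
set_option maxHeartbeats 1000000 in
theorem expected_roll_profit_asymmetric (μ₁ μ₂ σ₁ σ₂ s₁ s₂ n₁ n₂ : ℝ)
    (hσ₁ : 0 < σ₁) (hσ₂ : 0 < σ₂) (hs₁ : 0 < s₁) (hs₂ : 0 < s₂)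
    (hn₁ : 0 < n₁) (hn₂ : 0 < n₂)
    (a₁ a₂ b₁ b₂ : ℝ)
    (ha₁ : a₁ = (s₁ ^ 2 / n₁) * μ₁ / (σ₁ ^ 2 + s₁ ^ 2 / n₁))
    (ha₂ : a₂ = (s₂ ^ 2 / n₂) * μ₂ / (σ₂ ^ 2 + s₂ ^ 2 / n₂))
    (hb₁ : b₁ = σ₁ ^ 2 / (σ₁ ^ 2 + s₁ ^ 2 / n₁))
    (hb₂ : b₂ = σ₂ ^ 2 / (σ₂ ^ 2 + s₂ ^ 2 / n₂))
    (e v : ℝ) (he : e = μ₂ - μ₁)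
    (hv : v = Real.sqrt (σ₁ ^ 4 / (σ₁ ^ 2 + s₁ ^ 2 / n₁) + σ₂ ^ 4 / (σ₂ ^ 2 + s₂ ^ 2 / n₂))) :
    (∫ m₁, (∫ m₂, (∫ y₁, (∫ y₂,
            ((if a₁ + b₁ * y₁ > a₂ + b₂ * y₂ then (1 : ℝ) else 0) * m₁ +
              (1 - (if a₁ + b₁ * y₁ > a₂ + b₂ * y₂ then (1 : ℝ) else 0)) * m₂)
              ∂(gaussianReal m₂ ((s₂ ^ 2 / n₂).toNNReal)))
            ∂(gaussianReal m₁ ((s₁ ^ 2 / n₁).toNNReal)))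
          ∂(gaussianReal μ₂ ((σ₂ ^ 2).toNNReal)))
        ∂(gaussianReal μ₁ ((σ₁ ^ 2).toNNReal))) =
      μ₁ + e * stdNormalCdf (e / v) + v * stdNormalPdf (e / v) := by
  have ht₁ : (0:ℝ) < s₁ ^ 2 / n₁ := by positivity
  have ht₂ : (0:ℝ) < s₂ ^ 2 / n₂ := by positivity
  set t₁ : ℝ := s₁ ^ 2 / n₁ with ht₁def
  set t₂ : ℝ := s₂ ^ 2 / n₂ with ht₂def
  have hT₁ : (0:ℝ) < σ₁ ^ 2 := by positivity
  have hT₂ : (0:ℝ) < σ₂ ^ 2 := by positivity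
  have hb₁pos : 0 < b₁ := by rw [hb₁]; positivity
  have hb₂pos : 0 < b₂ := by rw [hb₂]; positivity
  have hVt₁ : (t₁.toNNReal) ≠ 0 := by rw [Ne, Real.toNNReal_eq_zero]; exact not_le.2 ht₁
  have hVt₂ : (t₂.toNNReal) ≠ 0 := by rw [Ne, Real.toNNReal_eq_zero]; exact not_le.2 ht₂
  have hVT₁ : ((σ₁ ^ 2).toNNReal) ≠ 0 := by rw [Ne, Real.toNNReal_eq_zero]; exact not_le.2 hT₁
  have hVT₂ : ((σ₂ ^ 2).toNNReal) ≠ 0 := by rw [Ne, Real.toNNReal_eq_zero]; exact not_le.2 hT₂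
  have hct₁ : ((t₁.toNNReal : ℝ≥0) : ℝ) = t₁ := Real.coe_toNNReal _ ht₁.le
  have hct₂ : ((t₂.toNNReal : ℝ≥0) : ℝ) = t₂ := Real.coe_toNNReal _ ht₂.le
  have hcT₁ : (((σ₁ ^ 2).toNNReal : ℝ≥0) : ℝ) = σ₁ ^ 2 := Real.coe_toNNReal _ hT₁.le
  have hcT₂ : (((σ₂ ^ 2).toNNReal : ℝ≥0) : ℝ) = σ₂ ^ 2 := Real.coe_toNNReal _ hT₂.le
  -- constants
  set d₀ : ℝ := b₂ * Real.sqrt t₂ with hd₀def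
  have hd₀ : 0 < d₀ := mul_pos hb₂pos (Real.sqrt_pos.2 ht₂)
  have hd₀2 : d₀ ^ 2 = b₂ ^ 2 * t₂ := by rw [hd₀def, mul_pow, Real.sq_sqrt ht₂.le]
  set A₃ : ℝ → ℝ := fun m₂ => (a₁ - a₂ - b₂ * m₂) / d₀ with hA₃def
  set B₃ : ℝ := b₁ / d₀ with hB₃def
  set R₃ : ℝ := Real.sqrt (1 + B₃ ^ 2 * t₁) with hR₃def
  have hR₃ : 0 < R₃ := Real.sqrt_pos.2 (by positivity)
  have hR₃2 : R₃ ^ 2 = 1 + B₃ ^ 2 * t₁ := Real.sq_sqrt (by positivity)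
  set D₃ : ℝ := d₀ * R₃ with hD₃def
  have hD₃ : 0 < D₃ := mul_pos hd₀ hR₃
  have hD₃2 : D₃ ^ 2 = b₂ ^ 2 * t₂ + b₁ ^ 2 * t₁ := by
    rw [hD₃def, mul_pow, hR₃2, hB₃def]
    field_simp
    linear_combination hd₀2
  set A₂ : ℝ → ℝ := fun m₁ => (a₁ + b₁ * m₁ - a₂) / D₃ with hA₂def
  set B₂ : ℝ := -b₂ / D₃ with hB₂def
  set R₂ : ℝ := Real.sqrt (1 + B₂ ^ 2 * σ₂ ^ 2) with hR₂def
  have hR₂ : 0 < R₂ := Real.sqrt_pos.2 (by positivity)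
  have hR₂2 : R₂ ^ 2 = 1 + B₂ ^ 2 * σ₂ ^ 2 := Real.sq_sqrt (by positivity)
  set D₂ : ℝ := D₃ * R₂ with hD₂def
  have hD₂ : 0 < D₂ := mul_pos hD₃ hR₂
  have hD₂2 : D₂ ^ 2 = b₂ ^ 2 * t₂ + b₁ ^ 2 * t₁ + b₂ ^ 2 * σ₂ ^ 2 := by
    rw [hD₂def, mul_pow, hR₂2, hB₂def]
    field_simp
    linear_combination hD₃2
  set A₁ : ℝ := (a₁ - a₂ - b₂ * μ₂) / D₂ with hA₁def
  set B₁' : ℝ := b₁ / D₂ with hB₁'def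
  set K₁ : ℝ := b₂ * σ₂ ^ 2 / D₂ with hK₁def
  set R₁ : ℝ := Real.sqrt (1 + B₁' ^ 2 * σ₁ ^ 2) with hR₁def
  have hR₁ : 0 < R₁ := Real.sqrt_pos.2 (by positivity)
  have hR₁2 : R₁ ^ 2 = 1 + B₁' ^ 2 * σ₁ ^ 2 := Real.sq_sqrt (by positivity)
  set D₁ : ℝ := D₂ * R₁ with hD₁def
  have hD₁ : 0 < D₁ := mul_pos hD₂ hR₁
  have hD₁2 : D₁ ^ 2 = b₂ ^ 2 * t₂ + b₁ ^ 2 * t₁ + b₂ ^ 2 * σ₂ ^ 2 + b₁ ^ 2 * σ₁ ^ 2 := by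
    rw [hD₁def, mul_pow, hR₁2, hB₁'def]
    field_simp
    linear_combination hD₂2
  have hvpos : 0 < v := by
    rw [hv]
    apply Real.sqrt_pos.2
    positivity
  have hv2 : v ^ 2 = σ₁ ^ 4 / (σ₁ ^ 2 + t₁) + σ₂ ^ 4 / (σ₂ ^ 2 + t₂) := by
    rw [hv]; exact Real.sq_sqrt (by positivity)
  have hD₁v : D₁ = v := by
    have hsq : D₁ ^ 2 = v ^ 2 := by
      rw [hD₁2, hv2, hb₁, hb₂]
      have h1 : σ₁ ^ 2 + t₁ ≠ 0 := by positivity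
      have h2 : σ₂ ^ 2 + t₂ ≠ 0 := by positivity
      field_simp
      ring
    calc D₁ = Real.sqrt (D₁ ^ 2) := (Real.sqrt_sq hD₁.le).symm
      _ = Real.sqrt (v ^ 2) := by rw [hsq]
      _ = v := Real.sqrt_sq hvpos.le
  have hsumv : b₁ * σ₁ ^ 2 + b₂ * σ₂ ^ 2 = v ^ 2 := by
    rw [hv2, hb₁, hb₂]
    have h1 : σ₁ ^ 2 + t₁ ≠ 0 := by positivity
    have h2 : σ₂ ^ 2 + t₂ ≠ 0 := by positivity
    field_simp
  have hfix1 : a₁ + b₁ * μ₁ = μ₁ := by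
    rw [ha₁, hb₁]
    have h1 : σ₁ ^ 2 + t₁ ≠ 0 := by positivity
    field_simp
    ring
  have hfix2 : a₂ + b₂ * μ₂ = μ₂ := by
    rw [ha₂, hb₂]
    have h2 : σ₂ ^ 2 + t₂ ≠ 0 := by positivity
    field_simp
    ring
  -- stage 4 : innermost integral over y₂
  have hstep4 : ∀ (M₁ M₂ Y₁ : ℝ),
      (∫ y₂, ((if a₁ + b₁ * Y₁ > a₂ + b₂ * y₂ then (1 : ℝ) else 0) * M₁ +
          (1 - (if a₁ + b₁ * Y₁ > a₂ + b₂ * y₂ then (1 : ℝ) else 0)) * M₂)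
          ∂(gaussianReal M₂ (t₂.toNNReal)))
        = M₂ + (M₁ - M₂) * stdNormalCdf (A₃ M₂ + B₃ * Y₁) := by
    intro M₁ M₂ Y₁
    rw [stage4 M₁ M₂ (a₁ + b₁ * Y₁) a₂ b₂ hb₂pos M₂ hVt₂]
    have harg : (a₁ + b₁ * Y₁ - a₂ - b₂ * M₂) / (b₂ * Real.sqrt ((t₂.toNNReal : ℝ≥0) : ℝ))
        = A₃ M₂ + B₃ * Y₁ := by
      rw [hct₂]
      simp only [hA₃def, hB₃def, hd₀def]
      ring
    rw [harg]
  -- stage 3 : integral over y₁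
  have hstep3 : ∀ (M₁ M₂ : ℝ),
      (∫ y₁, (M₂ + (M₁ - M₂) * stdNormalCdf (A₃ M₂ + B₃ * y₁)) ∂(gaussianReal M₁ (t₁.toNNReal)))
        = M₂ + (M₁ - M₂) * stdNormalCdf (A₂ M₁ + B₂ * M₂) := by
    intro M₁ M₂
    rw [stage_cdf M₂ (M₁ - M₂) (A₃ M₂) B₃ M₁ hVt₁]
    have harg : (A₃ M₂ + B₃ * M₁) / Real.sqrt (1 + B₃ ^ 2 * ((t₁.toNNReal : ℝ≥0) : ℝ))
        = A₂ M₁ + B₂ * M₂ := by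
      rw [hct₁, ← hR₃def]
      simp only [hA₃def, hB₃def, hA₂def, hB₂def, hD₃def]
      field_simp
      ring
    rw [harg]
  -- stage 2 : integral over m₂
  have hstep2 : ∀ (M₁ : ℝ),
      (∫ m₂, (m₂ + (M₁ - m₂) * stdNormalCdf (A₂ M₁ + B₂ * m₂))
          ∂(gaussianReal μ₂ ((σ₂ ^ 2).toNNReal)))
        = μ₂ + (M₁ - μ₂) * stdNormalCdf (A₁ + B₁' * M₁) + K₁ * stdNormalPdf (A₁ + B₁' * M₁) := by
    intro M₁
    rw [stage_lin M₁ (A₂ M₁) B₂ μ₂ hVT₂]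
    have harg : (A₂ M₁ + B₂ * μ₂) / Real.sqrt (1 + B₂ ^ 2 * (((σ₂ ^ 2).toNNReal : ℝ≥0) : ℝ))
        = A₁ + B₁' * M₁ := by
      rw [hcT₂, ← hR₂def]
      simp only [hA₂def, hB₂def, hA₁def, hB₁'def, hD₂def]
      field_simp
      ring
    rw [harg, hcT₂, ← hR₂def]
    have hK : K₁ = -(B₂ * σ₂ ^ 2 / R₂) := by
      simp only [hK₁def, hB₂def, hD₂def]
      field_simp
    rw [hK]
    ring
  -- stage 1 : integral over m₁
  have hstep1 :
      (∫ m₁, (μ₂ + (m₁ - μ₂) * stdNormalCdf (A₁ + B₁' * m₁) + K₁ * stdNormalPdf (A₁ + B₁' * m₁))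
          ∂(gaussianReal μ₁ ((σ₁ ^ 2).toNNReal)))
        = μ₂ + (μ₁ - μ₂) * stdNormalCdf (-(e / v)) + v * stdNormalPdf (-(e / v)) := by
    rw [stage_fin μ₂ K₁ A₁ B₁' μ₁ hVT₁]
    have harg : (A₁ + B₁' * μ₁) / R₁ = -(e / v) := by
      have h1 : A₁ + B₁' * μ₁ = -e / D₂ := by
        simp only [hA₁def, hB₁'def]
        rw [he]
        field_simp
        linarith [hfix1, hfix2]
      rw [h1, div_div, ← hD₁def, hD₁v, neg_div]
    have hcoef : (B₁' * σ₁ ^ 2 + K₁) / R₁ = v := by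
      have h1 : B₁' * σ₁ ^ 2 + K₁ = (b₁ * σ₁ ^ 2 + b₂ * σ₂ ^ 2) / D₂ := by
        simp only [hB₁'def, hK₁def]
        ring
      rw [h1, hsumv, div_div, ← hD₁def, hD₁v, sq, mul_div_assoc, div_self hvpos.ne', mul_one]
    rw [hcT₁, ← hR₁def, harg, hcoef]
  -- assemble
  simp only [hstep4]
  simp only [hstep3]
  simp only [hstep2]
  rw [hstep1, stdNormalCdf_neg, stdNormalPdf_neg, he]
  ring
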